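/- Let π be a degree-d noncrossing partition of the unit circle S. Then π has only finitely many non-singleton blocks A_1, …, A_k, each of which is a finite set, and the total criticality (|A_1| − 1) + (|A_2| − 1) + ⋯ + (|A_k| − 1) is at most d − 1. -/

import Mathlib

/-- The unit circle in `ℂ`. -/
abbrev Circ := {z : ℂ // ‖z‖ = 1}

/-- `p` is (the relation of) a degree-`d` noncrossing partition of the circle:
an equivalence relation whose classes have identical images under `z ↦ z^d` and whose
distinct classes have disjoint convex hulls. -/
def IsNCdPart (d : ℕ) (p : Circ → Circ → Prop) : Prop :=
  Equivalence p ∧ (∀ z w, p z w → (z : ℂ) ^ d = (w : ℂ) ^ d) ∧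
    ∀ z w, ¬ p z w →
      Disjoint (convexHull ℝ (Subtype.val '' {y | p z y}))
        (convexHull ℝ (Subtype.val '' {y | p w y}))

/-- The set of non-singleton blocks of the partition `p`. -/
def ncBlocks (p : Circ → Circ → Prop) : Set (Set Circ) :=
  {B | (∃ z, B = {y | p z y}) ∧ B.Nontrivial}


section Aux
open Complex Finset


set_option maxHeartbeats 1000000 in
lemma poly_ident (a1 a2 a3 a4 : ℂ) :
    ((a2^2-a3^2)*(a3^2-a4^2)*a1^4 + (a1^2-a2^2)*(a1^2-a4^2)*a3^4)
      * ((a1^2-a2^2)*(a2^2-a3^2)*a4^2 + (a1^2-a4^2)*(a3^2-a4^2)*a2^2)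
    = ((a1^2-a4^2)*(a3^2-a4^2)*a2^4 + (a1^2-a2^2)*(a2^2-a3^2)*a4^4)
      * ((a1^2-a2^2)*(a1^2-a4^2)*a3^2 + (a2^2-a3^2)*(a3^2-a4^2)*a1^2) := by
  ring

set_option maxHeartbeats 4000000 in
lemma key (a1 a2 a3 a4 : ℂ) (h1 : a1 ≠ 0) (h2 : a2 ≠ 0) (h3 : a3 ≠ 0) (h4 : a4 ≠ 0)
    (s12 s23 s34 s14 : ℂ)
    (e12 : s12 = (a1^2-a2^2)*I/(2*a1*a2))
    (e23 : s23 = (a2^2-a3^2)*I/(2*a2*a3))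
    (e34 : s34 = (a3^2-a4^2)*I/(2*a3*a4))
    (e14 : s14 = (a1^2-a4^2)*I/(2*a1*a4))
    (hD1 : s12*s14 + s23*s34 ≠ 0) (hD2 : s12*s23 + s14*s34 ≠ 0) :
    (s23*s34/(s12*s14+s23*s34)) * a1^2 + (s12*s14/(s12*s14+s23*s34)) * a3^2
    = (s14*s34/(s12*s23+s14*s34)) * a2^2 + (s12*s23/(s12*s23+s14*s34)) * a4^2 := by
  rw [div_mul_eq_mul_div, div_mul_eq_mul_div, ← add_div,
    div_mul_eq_mul_div, div_mul_eq_mul_div, ← add_div,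
    div_eq_div_iff hD1 hD2]
  subst e12 e23 e34 e14
  have hI : (I:ℂ) ≠ 0 := I_ne_zero
  field_simp
  linear_combination (16 * a1^2 * a2^2 * a3^2 * a4^2) * poly_ident a1 a2 a3 a4

/-- sine of a half-difference, in terms of half-angle exponentials. -/
lemma sin_half_diff (x y : ℝ) :
    ((Real.sin ((y - x)/2) : ℝ) : ℂ) =
      ((Complex.exp (↑(x/2) * I))^2 - (Complex.exp (↑(y/2) * I))^2) * I
        / (2 * Complex.exp (↑(x/2) * I) * Complex.exp (↑(y/2) * I)) := by
  have hx := Complex.exp_ne_zero (↑(x/2) * I)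
  have hy := Complex.exp_ne_zero (↑(y/2) * I)
  rw [Complex.ofReal_sin, Complex.sin, eq_div_iff (by simp [hx, hy])]
  rw [show -(((y - x)/2 : ℝ) : ℂ) * I = ↑(x/2) * I - ↑(y/2) * I by push_cast; ring,
      show (((y - x)/2 : ℝ) : ℂ) * I = ↑(y/2) * I - ↑(x/2) * I by push_cast; ring,
      Complex.exp_sub, Complex.exp_sub]
  field_simp

lemma exp_sq (x : ℝ) : Complex.exp ((x : ℝ) * I) = Complex.exp (↑(x/2) * I) ^ 2 := by
  rw [sq, ← Complex.exp_add]
  norm_num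
  push_cast
  ring_nf

set_option maxHeartbeats 1600000 in
/-- Two chords of the unit circle with interlaced endpoints meet. -/
lemma chords_meet (t1 t2 t3 t4 : ℝ) (h12 : t1 < t2) (h23 : t2 < t3) (h34 : t3 < t4)
    (h41 : t4 - t1 < 2 * Real.pi) :
    ∃ l m : ℝ, 0 ≤ l ∧ l ≤ 1 ∧ 0 ≤ m ∧ m ≤ 1 ∧
      l • Complex.exp ((t1 : ℝ) * I) + (1 - l) • Complex.exp ((t3 : ℝ) * I)
        = m • Complex.exp ((t2 : ℝ) * I) + (1 - m) • Complex.exp ((t4 : ℝ) * I) := by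
  have pi_pos := Real.pi_pos
  have hpos : ∀ x y : ℝ, x < y → y - x < 2 * Real.pi → 0 < Real.sin ((y - x)/2) := by
    intro x y hxy hlt
    apply Real.sin_pos_of_pos_of_lt_pi <;> [linarith; linarith]
  set s12 := Real.sin ((t2 - t1)/2) with hs12def
  set s23 := Real.sin ((t3 - t2)/2) with hs23def
  set s34 := Real.sin ((t4 - t3)/2) with hs34def
  set s14 := Real.sin ((t4 - t1)/2) with hs14def
  have h12p : 0 < s12 := hpos _ _ h12 (by linarith)
  have h23p : 0 < s23 := hpos _ _ h23 (by linarith)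
  have h34p : 0 < s34 := hpos _ _ h34 (by linarith)
  have h14p : 0 < s14 := hpos _ _ (by linarith) h41
  set D1 := s12 * s14 + s23 * s34 with hD1def
  set D2 := s12 * s23 + s14 * s34 with hD2def
  have hD1 : 0 < D1 := add_pos (mul_pos h12p h14p) (mul_pos h23p h34p)
  have hD2 : 0 < D2 := add_pos (mul_pos h12p h23p) (mul_pos h14p h34p)
  refine ⟨s23 * s34 / D1, s14 * s34 / D2,
    div_nonneg (mul_pos h23p h34p).le hD1.le, ?_,
    div_nonneg (mul_pos h14p h34p).le hD2.le, ?_, ?_⟩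
  · rw [div_le_one hD1]; nlinarith
  · rw [div_le_one hD2]; nlinarith
  · have e1 : (1 : ℝ) - s23 * s34 / D1 = s12 * s14 / D1 := by
      field_simp; rw [hD1def]; ring
    have e2 : (1 : ℝ) - s14 * s34 / D2 = s12 * s23 / D2 := by
      field_simp; rw [hD2def]; ring
    rw [e1, e2]
    have hk := key (Complex.exp (↑(t1/2) * I)) (Complex.exp (↑(t2/2) * I))
      (Complex.exp (↑(t3/2) * I)) (Complex.exp (↑(t4/2) * I))
      (Complex.exp_ne_zero _) (Complex.exp_ne_zero _) (Complex.exp_ne_zero _)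
      (Complex.exp_ne_zero _)
      ((s12 : ℝ) : ℂ) ((s23 : ℝ) : ℂ) ((s34 : ℝ) : ℂ) ((s14 : ℝ) : ℂ)
      (by rw [hs12def, sin_half_diff t1 t2])
      (by rw [hs23def, sin_half_diff t2 t3])
      (by rw [hs34def, sin_half_diff t3 t4])
      (by rw [hs14def, sin_half_diff t1 t4])
      (by
        rw [show ((s12:ℝ):ℂ) * ((s14:ℝ):ℂ) + ((s23:ℝ):ℂ) * ((s34:ℝ):ℂ) = ((D1:ℝ):ℂ) by
          rw [hD1def]; push_cast; ring]
        exact_mod_cast hD1.ne')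
      (by
        rw [show ((s12:ℝ):ℂ) * ((s23:ℝ):ℂ) + ((s14:ℝ):ℂ) * ((s34:ℝ):ℂ) = ((D2:ℝ):ℂ) by
          rw [hD2def]; push_cast; ring]
        exact_mod_cast hD2.ne')
    rw [← exp_sq t1, ← exp_sq t2, ← exp_sq t3, ← exp_sq t4] at hk
    simp only [real_smul]
    rw [hD1def, hD2def]
    push_cast
    linear_combination hk


lemma core : ∀ (N : ℕ) (F : Finset (Finset ℝ)) (a b : ℝ),
    (∑ G ∈ F, G.card) ≤ N →
    (∀ G ∈ F, G.Nonempty) →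
    (∀ G ∈ F, ∀ x ∈ G, ∀ y ∈ G, ∃ k : ℤ, x - y = (k : ℝ)) →
    (∀ G ∈ F, ∀ H ∈ F, G ≠ H → ∀ p ∈ G, ∀ q ∈ G, ∀ r ∈ H, ∀ s ∈ H,
      ¬(p < r ∧ r < q ∧ q < s)) →
    (∀ G ∈ F, ∀ H ∈ F, G ≠ H → Disjoint G H) →
    (∀ G ∈ F, ∀ x ∈ G, a < x ∧ x < b) →
    F.Nonempty →
    ((∑ G ∈ F, (G.card - 1) : ℕ) : ℝ) < b - a := by
  intro N
  induction N with
  | zero =>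
    intro F a b hN h1 _ _ _ _ hne
    obtain ⟨G, hG⟩ := hne
    have h2 : 1 ≤ G.card := Finset.card_pos.mpr (h1 G hG)
    have h3 : G.card ≤ ∑ G ∈ F, G.card :=
      Finset.single_le_sum (fun _ _ => Nat.zero_le _) hG
    omega
  | succ N IH =>
    intro F a b hN h1 h2 h3 h5 h4 hne
    classical
    -- the union of all blocks
    set T : Finset ℝ := F.biUnion id with hTdef
    have hTne : T.Nonempty := by
      obtain ⟨G, hG⟩ := hne
      obtain ⟨x, hx⟩ := h1 G hG
      exact ⟨x, Finset.mem_biUnion.mpr ⟨G, hG, hx⟩⟩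
    set x₁ := T.min' hTne with hx1def
    obtain ⟨A₀, hA₀F, hx₁A₀⟩ : ∃ A₀ ∈ F, x₁ ∈ A₀ := by
      have h := T.min'_mem hTne
      simp only [hTdef, Finset.mem_biUnion, id] at h
      exact h
    have hx1min : ∀ G ∈ F, ∀ x ∈ G, x₁ ≤ x := by
      intro G hG x hx
      exact T.min'_le x (Finset.mem_biUnion.mpr ⟨G, hG, hx⟩)
    have hother : ∀ G ∈ F, G ≠ A₀ → ∀ x ∈ G, x₁ < x := by
      intro G hG hGA x hx
      refine lt_of_le_of_ne (hx1min G hG x hx) fun h => ?_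
      exact (Finset.disjoint_left.mp (h5 G hG A₀ hA₀F hGA) hx) (h ▸ hx₁A₀)
    have hax₁ : a < x₁ := (h4 A₀ hA₀F x₁ hx₁A₀).1
    have hx₁b : x₁ < b := (h4 A₀ hA₀F x₁ hx₁A₀).2
    by_cases hA0e : (A₀.erase x₁).Nonempty
    · -- A₀ has at least two elements
      set x₂ := (A₀.erase x₁).min' hA0e with hx2def
      have hx₂e : x₂ ∈ A₀.erase x₁ := Finset.min'_mem _ _
      have hx₂A₀ : x₂ ∈ A₀ := Finset.mem_of_mem_erase hx₂e
      have hx₂ne : x₂ ≠ x₁ := Finset.ne_of_mem_erase hx₂e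
      have hx₁₂ : x₁ < x₂ := lt_of_le_of_ne (hx1min A₀ hA₀F x₂ hx₂A₀) (Ne.symm hx₂ne)
      obtain ⟨k, hk⟩ := h2 A₀ hA₀F x₂ hx₂A₀ x₁ hx₁A₀
      have hk1 : (1 : ℝ) ≤ (k : ℝ) := by
        have : (0 : ℝ) < (k : ℝ) := by rw [← hk]; linarith
        exact_mod_cast (by exact_mod_cast this : (0:ℤ) < k)
      have hcard2 : 2 ≤ A₀.card := by
        have h1' : 1 ≤ (A₀.erase x₁).card := Finset.card_pos.mpr hA0e
        have := Finset.card_erase_of_mem hx₁A₀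
        omega
      -- classification of other blocks
      have hclass : ∀ G ∈ F.erase A₀, (∀ x ∈ G, x₁ < x ∧ x < x₂) ∨ (∀ x ∈ G, x₂ < x) := by
        intro G hG
        have hGF := Finset.mem_of_mem_erase hG
        have hGA : G ≠ A₀ := Finset.ne_of_mem_erase hG
        have hgt : ∀ x ∈ G, x₁ < x := hother G hGF hGA
        have hne₂ : ∀ x ∈ G, x ≠ x₂ := by
          intro x hx h
          exact (Finset.disjoint_left.mp (h5 G hGF A₀ hA₀F hGA) hx) (h ▸ hx₂A₀)
        by_cases hall : ∀ x ∈ G, x < x₂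
        · exact Or.inl fun x hx => ⟨hgt x hx, hall x hx⟩
        · push_neg at hall
          obtain ⟨s, hsG, hs⟩ := hall
          have hs2 : x₂ < s := lt_of_le_of_ne hs (Ne.symm (hne₂ s hsG))
          refine Or.inr fun r hr => ?_
          by_contra hr2
          push_neg at hr2
          have hrlt : r < x₂ := lt_of_le_of_ne hr2 (hne₂ r hr)
          exact h3 A₀ hA₀F G hGF (Ne.symm hGA) x₁ hx₁A₀ x₂ hx₂A₀ r hr s hsG
            ⟨hgt r hr, hrlt, hs2⟩
      set F₁ := (F.erase A₀).filter (fun G => ∀ x ∈ G, x < x₂) with hF₁def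
      set Fr := (F.erase A₀).filter (fun G => ¬ ∀ x ∈ G, x < x₂) with hFrdef
      have hF₁prop : ∀ G ∈ F₁, ∀ x ∈ G, x₁ < x ∧ x < x₂ := by
        intro G hG x hx
        have := Finset.mem_filter.mp hG
        exact ⟨hother G (Finset.mem_of_mem_erase this.1) (Finset.ne_of_mem_erase this.1) x hx,
          this.2 x hx⟩
      have hFrprop : ∀ G ∈ Fr, ∀ x ∈ G, x₂ < x := by
        intro G hG
        have := Finset.mem_filter.mp hG
        rcases hclass G this.1 with h | h
        · exact absurd (fun x hx => (h x hx).2) this.2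
        · exact h
      set A₀' := A₀.erase x₁ with hA₀'def
      have hA₀'card : A₀'.card = A₀.card - 1 := Finset.card_erase_of_mem hx₁A₀
      have hA₀'ne : A₀'.Nonempty := hA0e
      have hA₀'sub : A₀' ⊆ A₀ := Finset.erase_subset _ _
      have hA₀'x₂ : ∀ x ∈ A₀', x₂ ≤ x := fun x hx => Finset.min'_le _ x hx
      have hA₀'notFr : A₀' ∉ Fr := by
        intro h
        have h' := Finset.mem_filter.mp h
        have hd := h5 A₀' (Finset.mem_of_mem_erase h'.1) A₀ hA₀F
          (Finset.ne_of_mem_erase h'.1)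
        exact (Finset.disjoint_left.mp hd (hx₂e)) hx₂A₀
      set F' := insert A₀' Fr with hF'def
      have hmemFr : ∀ G ∈ Fr, G ∈ F ∧ G ≠ A₀ :=
        fun G hG => ⟨Finset.mem_of_mem_erase (Finset.mem_filter.mp hG).1,
          Finset.ne_of_mem_erase (Finset.mem_filter.mp hG).1⟩
      have hpair : ∀ G ∈ F', ∀ H ∈ F', G ≠ H →
          ∃ G₀ ∈ F, ∃ H₀ ∈ F, G ⊆ G₀ ∧ H ⊆ H₀ ∧ G₀ ≠ H₀ := by
        intro G hG H hH hGH
        rcases Finset.mem_insert.mp hG with rfl | hG'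
        · rcases Finset.mem_insert.mp hH with rfl | hH'
          · exact absurd rfl hGH
          · exact ⟨A₀, hA₀F, H, (hmemFr H hH').1, hA₀'sub, subset_rfl,
              Ne.symm (hmemFr H hH').2⟩
        · rcases Finset.mem_insert.mp hH with rfl | hH'
          · exact ⟨G, (hmemFr G hG').1, A₀, hA₀F, subset_rfl, hA₀'sub, (hmemFr G hG').2⟩
          · exact ⟨G, (hmemFr G hG').1, H, (hmemFr H hH').1, subset_rfl, subset_rfl, hGH⟩
      have h1' : ∀ G ∈ F', G.Nonempty := by
        intro G hG
        rcases Finset.mem_insert.mp hG with rfl | hG'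
        · exact hA₀'ne
        · exact h1 G (hmemFr G hG').1
      have hsub' : ∀ G ∈ F', ∃ G₀ ∈ F, G ⊆ G₀ := by
        intro G hG
        rcases Finset.mem_insert.mp hG with rfl | hG'
        · exact ⟨A₀, hA₀F, hA₀'sub⟩
        · exact ⟨G, (hmemFr G hG').1, subset_rfl⟩
      have h2' : ∀ G ∈ F', ∀ x ∈ G, ∀ y ∈ G, ∃ k : ℤ, x - y = (k : ℝ) := by
        intro G hG x hx y hy
        obtain ⟨G₀, hG₀, hsub⟩ := hsub' G hG
        exact h2 G₀ hG₀ x (hsub hx) y (hsub hy)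
      have h3' : ∀ G ∈ F', ∀ H ∈ F', G ≠ H → ∀ p ∈ G, ∀ q ∈ G, ∀ r ∈ H, ∀ s ∈ H,
          ¬(p < r ∧ r < q ∧ q < s) := by
        intro G hG H hH hGH p hp q hq r hr s hs
        obtain ⟨G₀, hG₀, H₀, hH₀, hsG, hsH, hne₀⟩ := hpair G hG H hH hGH
        exact h3 G₀ hG₀ H₀ hH₀ hne₀ p (hsG hp) q (hsG hq) r (hsH hr) s (hsH hs)
      have h5' : ∀ G ∈ F', ∀ H ∈ F', G ≠ H → Disjoint G H := by
        intro G hG H hH hGH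
        obtain ⟨G₀, hG₀, H₀, hH₀, hsG, hsH, hne₀⟩ := hpair G hG H hH hGH
        exact Finset.disjoint_of_subset_left hsG
          (Finset.disjoint_of_subset_right hsH (h5 G₀ hG₀ H₀ hH₀ hne₀))
      have hx₂lt : ∀ G ∈ F', ∀ x ∈ G, x₂ ≤ x ∧ x < b := by
        intro G hG x hx
        rcases Finset.mem_insert.mp hG with rfl | hG'
        · exact ⟨hA₀'x₂ x hx, (h4 A₀ hA₀F x (hA₀'sub hx)).2⟩
        · exact ⟨(hFrprop G hG' x hx).le,
            (h4 G (hmemFr G hG').1 x hx).2⟩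
      -- sums
      have hsumcard : A₀.card + ∑ G ∈ F.erase A₀, G.card = ∑ G ∈ F, G.card := by
        have h := Finset.add_sum_erase F (fun G => G.card) hA₀F
        simpa using h
      have hsplitcard : ∑ G ∈ F.erase A₀, G.card = ∑ G ∈ F₁, G.card + ∑ G ∈ Fr, G.card := by
        rw [hF₁def, hFrdef]
        exact (Finset.sum_filter_add_sum_filter_not _ _ _).symm
      have hsumF' : ∑ G ∈ F', G.card = (A₀.card - 1) + ∑ G ∈ Fr, G.card := by
        rw [hF'def, Finset.sum_insert hA₀'notFr, hA₀'card]
      have hcontF : ∑ G ∈ F, (G.card - 1) = (A₀.card - 1) + ∑ G ∈ F.erase A₀, (G.card - 1) := by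
        rw [← Finset.add_sum_erase F _ hA₀F]
      have hsplitcont : ∑ G ∈ F.erase A₀, (G.card - 1)
          = ∑ G ∈ F₁, (G.card - 1) + ∑ G ∈ Fr, (G.card - 1) := by
        rw [hF₁def, hFrdef]
        exact (Finset.sum_filter_add_sum_filter_not _ _ _).symm
      have hcontF' : ∑ G ∈ F', (G.card - 1) = (A₀.card - 2) + ∑ G ∈ Fr, (G.card - 1) := by
        rw [hF'def, Finset.sum_insert hA₀'notFr, hA₀'card]
        omega
      -- bound for F₁
      have hF₁sub : F₁ ⊆ F.erase A₀ := Finset.filter_subset _ _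
      have hF₁card : ∑ G ∈ F₁, G.card ≤ N := by
        have h := Finset.sum_le_sum_of_subset hF₁sub (f := fun G => G.card)
        omega
      have hc1 : ((∑ G ∈ F₁, (G.card - 1) : ℕ) : ℝ) ≤ (k : ℝ) - 1 := by
        by_cases hF₁ne : F₁.Nonempty
        · have hlt := IH F₁ x₁ x₂ hF₁card
            (fun G hG => h1 G (Finset.mem_of_mem_erase (hF₁sub hG)))
            (fun G hG => h2 G (Finset.mem_of_mem_erase (hF₁sub hG)))
            (fun G hG H hH => h3 G (Finset.mem_of_mem_erase (hF₁sub hG))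
              H (Finset.mem_of_mem_erase (hF₁sub hH)))
            (fun G hG H hH => h5 G (Finset.mem_of_mem_erase (hF₁sub hG))
              H (Finset.mem_of_mem_erase (hF₁sub hH)))
            hF₁prop hF₁ne
          rw [show x₂ - x₁ = (k : ℝ) from hk] at hlt
          have hint : ((∑ G ∈ F₁, (G.card - 1) : ℕ) : ℤ) < k := by exact_mod_cast hlt
          have : ((∑ G ∈ F₁, (G.card - 1) : ℕ) : ℤ) ≤ k - 1 := by omega
          calc ((∑ G ∈ F₁, (G.card - 1) : ℕ) : ℝ) = (((∑ G ∈ F₁, (G.card - 1) : ℕ) : ℤ) : ℝ) := by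
                push_cast; ring
            _ ≤ ((k - 1 : ℤ) : ℝ) := by exact_mod_cast this
            _ = (k : ℝ) - 1 := by push_cast; ring
        · rw [Finset.not_nonempty_iff_eq_empty] at hF₁ne
          rw [hF₁ne]
          simpa using by linarith
      -- bound for F'
      have hF'card : ∑ G ∈ F', G.card ≤ N := by
        have h := Finset.sum_le_sum_of_subset (Finset.filter_subset
          (fun G => ¬ ∀ x ∈ G, x < x₂) (F.erase A₀)) (f := fun G => G.card)
        rw [hsumF']
        omega
      have hc' : ∀ a' : ℝ, a' < x₂ → ((∑ G ∈ F', (G.card - 1) : ℕ) : ℝ) < b - a' := by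
        intro a' ha'
        exact IH F' a' b hF'card h1' h2' h3' h5'
          (fun G hG x hx => ⟨lt_of_lt_of_le ha' (hx₂lt G hG x hx).1, (hx₂lt G hG x hx).2⟩)
          ⟨A₀', Finset.mem_insert_self _ _⟩
      have hc'2 : ((∑ G ∈ F', (G.card - 1) : ℕ) : ℝ) ≤ b - x₂ := by
        by_contra hcon
        push_neg at hcon
        have := hc' (b - ((∑ G ∈ F', (G.card - 1) : ℕ) : ℝ)) (by linarith)
        linarith
      -- conclude
      have hcontsplit : (∑ G ∈ F, (G.card - 1))
          = ∑ G ∈ F₁, (G.card - 1) + ∑ G ∈ F', (G.card - 1) + 1 := by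
        omega
      rw [hcontsplit, Nat.cast_add, Nat.cast_add, Nat.cast_one]
      linarith
    · -- A₀ is a singleton
      have hA₀card : A₀.card = 1 := by
        have := Finset.card_erase_of_mem hx₁A₀
        have h1' : 1 ≤ A₀.card := Finset.card_pos.mpr ⟨x₁, hx₁A₀⟩
        rw [Finset.not_nonempty_iff_eq_empty] at hA0e
        have := Finset.card_eq_zero.mpr hA0e
        omega
      have hsum : (∑ G ∈ F, (G.card - 1)) = ∑ G ∈ F.erase A₀, (G.card - 1) := by
        rw [← Finset.add_sum_erase F _ hA₀F, hA₀card]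
        simp
      rw [hsum]
      by_cases hFe : (F.erase A₀).Nonempty
      · apply IH (F.erase A₀) a b
        · have h := Finset.add_sum_erase F (fun G => G.card) hA₀F
          omega
        · exact fun G hG => h1 G (Finset.mem_of_mem_erase hG)
        · exact fun G hG => h2 G (Finset.mem_of_mem_erase hG)
        · exact fun G hG H hH => h3 G (Finset.mem_of_mem_erase hG) H (Finset.mem_of_mem_erase hH)
        · exact fun G hG H hH => h5 G (Finset.mem_of_mem_erase hG) H (Finset.mem_of_mem_erase hH)
        · exact fun G hG => h4 G (Finset.mem_of_mem_erase hG)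
        · exact hFe
      · rw [Finset.not_nonempty_iff_eq_empty] at hFe
        rw [hFe]
        simp
        linarith


lemma top : ∀ (N : ℕ) (F : Finset (Finset ℝ)) (A₀ : Finset ℝ) (x₁ b : ℝ),
    (∑ G ∈ F, G.card) ≤ N →
    A₀ ∈ F → x₁ ∈ A₀ →
    (∀ G ∈ F, G.Nonempty) →
    (∀ G ∈ F, ∀ x ∈ G, ∀ y ∈ G, ∃ k : ℤ, x - y = (k : ℝ)) →
    (∀ G ∈ F, ∀ H ∈ F, G ≠ H → ∀ p ∈ G, ∀ q ∈ G, ∀ r ∈ H, ∀ s ∈ H,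
      ¬(p < r ∧ r < q ∧ q < s)) →
    (∀ G ∈ F, ∀ H ∈ F, G ≠ H → Disjoint G H) →
    (∀ G ∈ F, ∀ x ∈ G, x₁ ≤ x ∧ x < b) →
    (∀ x ∈ A₀, ∃ k : ℤ, b - x = (k : ℝ)) →
    ((∑ G ∈ F, (G.card - 1) : ℕ) : ℝ) ≤ b - x₁ - 1 := by
  intro N
  induction N with
  | zero =>
    intro F A₀ x₁ b hN hA₀F hx₁A₀ h1 _ _ _ _ _
    have h2 : 1 ≤ A₀.card := Finset.card_pos.mpr ⟨x₁, hx₁A₀⟩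
    have h3 : A₀.card ≤ ∑ G ∈ F, G.card :=
      Finset.single_le_sum (fun _ _ => Nat.zero_le _) hA₀F
    omega
  | succ N IH =>
    intro F A₀ x₁ b hN hA₀F hx₁A₀ h1 h2 h3 h5 h4 hgrid
    classical
    obtain ⟨k₁, hk₁⟩ := hgrid x₁ hx₁A₀
    have hx₁b : x₁ < b := (h4 A₀ hA₀F x₁ hx₁A₀).2
    have hk₁1 : (1 : ℝ) ≤ (k₁ : ℝ) := by
      have : (0 : ℝ) < (k₁ : ℝ) := by rw [← hk₁]; linarith
      exact_mod_cast (by exact_mod_cast this : (0:ℤ) < k₁)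
    have hother : ∀ G ∈ F, G ≠ A₀ → ∀ x ∈ G, x₁ < x := by
      intro G hG hGA x hx
      refine lt_of_le_of_ne ((h4 G hG x hx).1) fun h => ?_
      exact (Finset.disjoint_left.mp (h5 G hG A₀ hA₀F hGA) hx) (h ▸ hx₁A₀)
    by_cases hA0e : (A₀.erase x₁).Nonempty
    · -- A₀ has at least two elements
      set x₂ := (A₀.erase x₁).min' hA0e with hx2def
      have hx₂e : x₂ ∈ A₀.erase x₁ := Finset.min'_mem _ _
      have hx₂A₀ : x₂ ∈ A₀ := Finset.mem_of_mem_erase hx₂e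
      have hx₂ne : x₂ ≠ x₁ := Finset.ne_of_mem_erase hx₂e
      have hx₁₂ : x₁ < x₂ := lt_of_le_of_ne (h4 A₀ hA₀F x₂ hx₂A₀).1 (Ne.symm hx₂ne)
      obtain ⟨k₂, hk₂⟩ := hgrid x₂ hx₂A₀
      have hcard2 : 2 ≤ A₀.card := by
        have h1' : 1 ≤ (A₀.erase x₁).card := Finset.card_pos.mpr hA0e
        have := Finset.card_erase_of_mem hx₁A₀
        omega
      have hclass : ∀ G ∈ F.erase A₀, (∀ x ∈ G, x₁ < x ∧ x < x₂) ∨ (∀ x ∈ G, x₂ < x) := by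
        intro G hG
        have hGF := Finset.mem_of_mem_erase hG
        have hGA : G ≠ A₀ := Finset.ne_of_mem_erase hG
        have hgt : ∀ x ∈ G, x₁ < x := hother G hGF hGA
        have hne₂ : ∀ x ∈ G, x ≠ x₂ := by
          intro x hx h
          exact (Finset.disjoint_left.mp (h5 G hGF A₀ hA₀F hGA) hx) (h ▸ hx₂A₀)
        by_cases hall : ∀ x ∈ G, x < x₂
        · exact Or.inl fun x hx => ⟨hgt x hx, hall x hx⟩
        · push_neg at hall
          obtain ⟨s, hsG, hs⟩ := hall
          have hs2 : x₂ < s := lt_of_le_of_ne hs (Ne.symm (hne₂ s hsG))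
          refine Or.inr fun r hr => ?_
          by_contra hr2
          push_neg at hr2
          have hrlt : r < x₂ := lt_of_le_of_ne hr2 (hne₂ r hr)
          exact h3 A₀ hA₀F G hGF (Ne.symm hGA) x₁ hx₁A₀ x₂ hx₂A₀ r hr s hsG
            ⟨hgt r hr, hrlt, hs2⟩
      set F₁ := (F.erase A₀).filter (fun G => ∀ x ∈ G, x < x₂) with hF₁def
      set Fr := (F.erase A₀).filter (fun G => ¬ ∀ x ∈ G, x < x₂) with hFrdef
      have hF₁prop : ∀ G ∈ F₁, ∀ x ∈ G, x₁ < x ∧ x < x₂ := by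
        intro G hG x hx
        have := Finset.mem_filter.mp hG
        exact ⟨hother G (Finset.mem_of_mem_erase this.1) (Finset.ne_of_mem_erase this.1) x hx,
          this.2 x hx⟩
      have hFrprop : ∀ G ∈ Fr, ∀ x ∈ G, x₂ < x := by
        intro G hG
        have := Finset.mem_filter.mp hG
        rcases hclass G this.1 with h | h
        · exact absurd (fun x hx => (h x hx).2) this.2
        · exact h
      set A₀' := A₀.erase x₁ with hA₀'def
      have hA₀'card : A₀'.card = A₀.card - 1 := Finset.card_erase_of_mem hx₁A₀
      have hA₀'ne : A₀'.Nonempty := hA0e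
      have hA₀'sub : A₀' ⊆ A₀ := Finset.erase_subset _ _
      have hA₀'x₂ : ∀ x ∈ A₀', x₂ ≤ x := fun x hx => Finset.min'_le _ x hx
      have hA₀'notFr : A₀' ∉ Fr := by
        intro h
        have h' := Finset.mem_filter.mp h
        have hd := h5 A₀' (Finset.mem_of_mem_erase h'.1) A₀ hA₀F
          (Finset.ne_of_mem_erase h'.1)
        exact (Finset.disjoint_left.mp hd (hx₂e)) hx₂A₀
      set F' := insert A₀' Fr with hF'def
      have hmemFr : ∀ G ∈ Fr, G ∈ F ∧ G ≠ A₀ :=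
        fun G hG => ⟨Finset.mem_of_mem_erase (Finset.mem_filter.mp hG).1,
          Finset.ne_of_mem_erase (Finset.mem_filter.mp hG).1⟩
      have hpair : ∀ G ∈ F', ∀ H ∈ F', G ≠ H →
          ∃ G₀ ∈ F, ∃ H₀ ∈ F, G ⊆ G₀ ∧ H ⊆ H₀ ∧ G₀ ≠ H₀ := by
        intro G hG H hH hGH
        rcases Finset.mem_insert.mp hG with rfl | hG'
        · rcases Finset.mem_insert.mp hH with rfl | hH'
          · exact absurd rfl hGH
          · exact ⟨A₀, hA₀F, H, (hmemFr H hH').1, hA₀'sub, subset_rfl,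
              Ne.symm (hmemFr H hH').2⟩
        · rcases Finset.mem_insert.mp hH with rfl | hH'
          · exact ⟨G, (hmemFr G hG').1, A₀, hA₀F, subset_rfl, hA₀'sub, (hmemFr G hG').2⟩
          · exact ⟨G, (hmemFr G hG').1, H, (hmemFr H hH').1, subset_rfl, subset_rfl, hGH⟩
      have h1' : ∀ G ∈ F', G.Nonempty := by
        intro G hG
        rcases Finset.mem_insert.mp hG with rfl | hG'
        · exact hA₀'ne
        · exact h1 G (hmemFr G hG').1
      have hsub' : ∀ G ∈ F', ∃ G₀ ∈ F, G ⊆ G₀ := by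
        intro G hG
        rcases Finset.mem_insert.mp hG with rfl | hG'
        · exact ⟨A₀, hA₀F, hA₀'sub⟩
        · exact ⟨G, (hmemFr G hG').1, subset_rfl⟩
      have h2' : ∀ G ∈ F', ∀ x ∈ G, ∀ y ∈ G, ∃ k : ℤ, x - y = (k : ℝ) := by
        intro G hG x hx y hy
        obtain ⟨G₀, hG₀, hsub⟩ := hsub' G hG
        exact h2 G₀ hG₀ x (hsub hx) y (hsub hy)
      have h3' : ∀ G ∈ F', ∀ H ∈ F', G ≠ H → ∀ p ∈ G, ∀ q ∈ G, ∀ r ∈ H, ∀ s ∈ H,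
          ¬(p < r ∧ r < q ∧ q < s) := by
        intro G hG H hH hGH p hp q hq r hr s hs
        obtain ⟨G₀, hG₀, H₀, hH₀, hsG, hsH, hne₀⟩ := hpair G hG H hH hGH
        exact h3 G₀ hG₀ H₀ hH₀ hne₀ p (hsG hp) q (hsG hq) r (hsH hr) s (hsH hs)
      have h5' : ∀ G ∈ F', ∀ H ∈ F', G ≠ H → Disjoint G H := by
        intro G hG H hH hGH
        obtain ⟨G₀, hG₀, H₀, hH₀, hsG, hsH, hne₀⟩ := hpair G hG H hH hGH
        exact Finset.disjoint_of_subset_left hsG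
          (Finset.disjoint_of_subset_right hsH (h5 G₀ hG₀ H₀ hH₀ hne₀))
      have h4' : ∀ G ∈ F', ∀ x ∈ G, x₂ ≤ x ∧ x < b := by
        intro G hG x hx
        rcases Finset.mem_insert.mp hG with rfl | hG'
        · exact ⟨hA₀'x₂ x hx, (h4 A₀ hA₀F x (hA₀'sub hx)).2⟩
        · exact ⟨(hFrprop G hG' x hx).le, (h4 G (hmemFr G hG').1 x hx).2⟩
      -- sums
      have hsumcard : A₀.card + ∑ G ∈ F.erase A₀, G.card = ∑ G ∈ F, G.card := by
        have h := Finset.add_sum_erase F (fun G => G.card) hA₀F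
        simpa using h
      have hsplitcard : ∑ G ∈ F.erase A₀, G.card = ∑ G ∈ F₁, G.card + ∑ G ∈ Fr, G.card := by
        rw [hF₁def, hFrdef]
        exact (Finset.sum_filter_add_sum_filter_not _ _ _).symm
      have hsumF' : ∑ G ∈ F', G.card = (A₀.card - 1) + ∑ G ∈ Fr, G.card := by
        rw [hF'def, Finset.sum_insert hA₀'notFr, hA₀'card]
      have hcontF : ∑ G ∈ F, (G.card - 1) = (A₀.card - 1) + ∑ G ∈ F.erase A₀, (G.card - 1) := by
        rw [← Finset.add_sum_erase F _ hA₀F]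
      have hsplitcont : ∑ G ∈ F.erase A₀, (G.card - 1)
          = ∑ G ∈ F₁, (G.card - 1) + ∑ G ∈ Fr, (G.card - 1) := by
        rw [hF₁def, hFrdef]
        exact (Finset.sum_filter_add_sum_filter_not _ _ _).symm
      have hcontF' : ∑ G ∈ F', (G.card - 1) = (A₀.card - 2) + ∑ G ∈ Fr, (G.card - 1) := by
        rw [hF'def, Finset.sum_insert hA₀'notFr, hA₀'card]
        omega
      -- bound for F₁ via core
      have hF₁sub : F₁ ⊆ F.erase A₀ := Finset.filter_subset _ _
      have hF₁card : ∑ G ∈ F₁, G.card ≤ N := by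
        have h := Finset.sum_le_sum_of_subset hF₁sub (f := fun G => G.card)
        omega
      have hc1 : ((∑ G ∈ F₁, (G.card - 1) : ℕ) : ℝ) ≤ (x₂ - x₁) - 1 := by
        by_cases hF₁ne : F₁.Nonempty
        · have hlt := core N F₁ x₁ x₂ hF₁card
            (fun G hG => h1 G (Finset.mem_of_mem_erase (hF₁sub hG)))
            (fun G hG => h2 G (Finset.mem_of_mem_erase (hF₁sub hG)))
            (fun G hG H hH => h3 G (Finset.mem_of_mem_erase (hF₁sub hG))
              H (Finset.mem_of_mem_erase (hF₁sub hH)))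
            (fun G hG H hH => h5 G (Finset.mem_of_mem_erase (hF₁sub hG))
              H (Finset.mem_of_mem_erase (hF₁sub hH)))
            hF₁prop hF₁ne
          have hgap : x₂ - x₁ = ((k₁ - k₂ : ℤ) : ℝ) := by push_cast; linarith
          rw [hgap] at hlt ⊢
          have hint : ((∑ G ∈ F₁, (G.card - 1) : ℕ) : ℤ) < k₁ - k₂ := by exact_mod_cast hlt
          have hle : ((∑ G ∈ F₁, (G.card - 1) : ℕ) : ℤ) ≤ k₁ - k₂ - 1 := by omega
          calc ((∑ G ∈ F₁, (G.card - 1) : ℕ) : ℝ)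
              = (((∑ G ∈ F₁, (G.card - 1) : ℕ) : ℤ) : ℝ) := by push_cast; ring
            _ ≤ ((k₁ - k₂ - 1 : ℤ) : ℝ) := by exact_mod_cast hle
            _ = ((k₁ - k₂ : ℤ) : ℝ) - 1 := by push_cast; ring
        · rw [Finset.not_nonempty_iff_eq_empty] at hF₁ne
          rw [hF₁ne]
          have hgap : x₂ - x₁ = ((k₁ - k₂ : ℤ) : ℝ) := by push_cast; linarith
          have hpos : (0:ℤ) < k₁ - k₂ := by
            have h0 : (0:ℝ) < ((k₁ - k₂ : ℤ) : ℝ) := by rw [← hgap]; linarith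
            exact_mod_cast h0
          have h1le : (1:ℝ) ≤ ((k₁ - k₂ : ℤ) : ℝ) := by exact_mod_cast hpos
          rw [hgap]
          simpa using by linarith
      -- bound for F' via IH
      have hF'card : ∑ G ∈ F', G.card ≤ N := by
        have h := Finset.sum_le_sum_of_subset (Finset.filter_subset
          (fun G => ¬ ∀ x ∈ G, x < x₂) (F.erase A₀)) (f := fun G => G.card)
        rw [hsumF']
        omega
      have hgrid' : ∀ x ∈ A₀', ∃ k : ℤ, b - x = (k : ℝ) :=
        fun x hx => hgrid x (hA₀'sub hx)
      have hc' : ((∑ G ∈ F', (G.card - 1) : ℕ) : ℝ) ≤ b - x₂ - 1 :=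
        IH F' A₀' x₂ b hF'card (Finset.mem_insert_self _ _) hx₂e h1' h2' h3' h5' h4' hgrid'
      -- conclude
      have hcontsplit : (∑ G ∈ F, (G.card - 1))
          = ∑ G ∈ F₁, (G.card - 1) + ∑ G ∈ F', (G.card - 1) + 1 := by
        omega
      rw [hcontsplit, Nat.cast_add, Nat.cast_add, Nat.cast_one]
      linarith
    · -- A₀ is a singleton
      have hA₀card : A₀.card = 1 := by
        have := Finset.card_erase_of_mem hx₁A₀
        have h1' : 1 ≤ A₀.card := Finset.card_pos.mpr ⟨x₁, hx₁A₀⟩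
        rw [Finset.not_nonempty_iff_eq_empty] at hA0e
        have := Finset.card_eq_zero.mpr hA0e
        omega
      have hsum : (∑ G ∈ F, (G.card - 1)) = ∑ G ∈ F.erase A₀, (G.card - 1) := by
        rw [← Finset.add_sum_erase F _ hA₀F, hA₀card]
        simp
      rw [hsum]
      by_cases hFe : (F.erase A₀).Nonempty
      · have hlt := core N (F.erase A₀) x₁ b
          (by
            have h := Finset.add_sum_erase F (fun G => G.card) hA₀F
            omega)
          (fun G hG => h1 G (Finset.mem_of_mem_erase hG))
          (fun G hG => h2 G (Finset.mem_of_mem_erase hG))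
          (fun G hG H hH => h3 G (Finset.mem_of_mem_erase hG) H (Finset.mem_of_mem_erase hH))
          (fun G hG H hH => h5 G (Finset.mem_of_mem_erase hG) H (Finset.mem_of_mem_erase hH))
          (fun G hG x hx => ⟨hother G (Finset.mem_of_mem_erase hG)
            (Finset.ne_of_mem_erase hG) x hx, (h4 G (Finset.mem_of_mem_erase hG) x hx).2⟩)
          hFe
        rw [hk₁] at hlt ⊢
        have hint : ((∑ G ∈ F.erase A₀, (G.card - 1) : ℕ) : ℤ) < k₁ := by exact_mod_cast hlt
        have hle : ((∑ G ∈ F.erase A₀, (G.card - 1) : ℕ) : ℤ) ≤ k₁ - 1 := by omega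
        calc ((∑ G ∈ F.erase A₀, (G.card - 1) : ℕ) : ℝ)
            = (((∑ G ∈ F.erase A₀, (G.card - 1) : ℕ) : ℤ) : ℝ) := by push_cast; ring
          _ ≤ ((k₁ - 1 : ℤ) : ℝ) := by exact_mod_cast hle
          _ = (k₁ : ℝ) - 1 := by push_cast; ring
      · rw [Finset.not_nonempty_iff_eq_empty] at hFe
        rw [hFe]
        simpa using by linarith

lemma circ_ne_zero (z : Circ) : (z : ℂ) ≠ 0 := by
  intro h
  have h2 := z.2
  rw [h] at h2
  simp at h2

noncomputable def psi (x₀ z : Circ) : ℝ :=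
  if Complex.arg ((z : ℂ) / (x₀ : ℂ)) < 0 then Complex.arg ((z : ℂ) / (x₀ : ℂ)) + 2 * Real.pi
  else Complex.arg ((z : ℂ) / (x₀ : ℂ))

lemma psi_self (x₀ : Circ) : psi x₀ x₀ = 0 := by
  unfold psi
  rw [div_self (circ_ne_zero x₀)]
  simp [Complex.arg_one]

lemma psi_nonneg (x₀ z : Circ) : 0 ≤ psi x₀ z := by
  unfold psi
  obtain ⟨h1, h2⟩ := Complex.arg_mem_Ioc ((z : ℂ) / (x₀ : ℂ))
  have hpi := Real.pi_pos
  split <;> linarith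

lemma psi_lt (x₀ z : Circ) : psi x₀ z < 2 * Real.pi := by
  unfold psi
  obtain ⟨h1, h2⟩ := Complex.arg_mem_Ioc ((z : ℂ) / (x₀ : ℂ))
  have hpi := Real.pi_pos
  split <;> linarith

lemma psi_exp (x₀ z : Circ) : (z : ℂ) = (x₀ : ℂ) * Complex.exp ((psi x₀ z : ℝ) * I) := by
  have habs : ‖(z : ℂ) / (x₀ : ℂ)‖ = 1 := by
    rw [norm_div, z.2, x₀.2]; norm_num
  have harg := Complex.norm_mul_exp_arg_mul_I ((z : ℂ) / (x₀ : ℂ))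
  rw [habs, Complex.ofReal_one, one_mul] at harg
  have hmain : Complex.exp ((psi x₀ z : ℝ) * I) = (z : ℂ) / (x₀ : ℂ) := by
    unfold psi
    split
    · rw [show ((Complex.arg ((z : ℂ) / (x₀ : ℂ)) + 2 * Real.pi : ℝ) : ℂ) * I
          = (Complex.arg ((z : ℂ) / (x₀ : ℂ)) : ℝ) * I + 2 * (Real.pi : ℂ) * I by
          push_cast; ring]
      rw [Complex.exp_add, Complex.exp_two_pi_mul_I, mul_one, harg]
    · rw [harg]
  rw [hmain, mul_div_cancel₀ _ (circ_ne_zero x₀)]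

lemma psi_inj (x₀ : Circ) : Function.Injective (psi x₀) := by
  intro z w h
  have hz := psi_exp x₀ z
  have hw := psi_exp x₀ w
  rw [h] at hz
  exact Subtype.ext (hz.trans hw.symm)

lemma psi_block (d : ℕ) (x₀ z w : Circ) (h : (z : ℂ) ^ d = (w : ℂ) ^ d) :
    ∃ k : ℤ, (d : ℝ) * psi x₀ z - (d : ℝ) * psi x₀ w = k * (2 * Real.pi) := by
  have hz := psi_exp x₀ z
  have hw := psi_exp x₀ w
  rw [hz, hw, mul_pow, mul_pow, ← Complex.exp_nat_mul, ← Complex.exp_nat_mul] at h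
  have h2 := mul_left_cancel₀ (pow_ne_zero d (circ_ne_zero x₀)) h
  obtain ⟨n, hn⟩ := Complex.exp_eq_exp_iff_exists_int.mp h2
  refine ⟨n, ?_⟩
  have h3 : (((d : ℝ) * psi x₀ z : ℝ) : ℂ) = (((d : ℝ) * psi x₀ w + n * (2 * Real.pi) : ℝ) : ℂ) := by
    apply mul_right_cancel₀ Complex.I_ne_zero
    push_cast
    push_cast at hn
    linear_combination hn
  have h4 := Complex.ofReal_inj.mp h3
  linarith

lemma block_finite (d : ℕ) (hd : 1 ≤ d) (p : Circ → Circ → Prop) (hp : IsNCdPart d p)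
    (z : Circ) : {y | p z y}.Finite := by
  have hfin : {x : ℂ | x ^ d = (z : ℂ) ^ d}.Finite := by
    have hne : (Polynomial.X ^ d - Polynomial.C ((z : ℂ) ^ d)) ≠ 0 :=
      Polynomial.X_pow_sub_C_ne_zero (by omega) _
    apply (Polynomial.finite_setOf_isRoot hne).subset
    intro x hx
    simp only [Set.mem_setOf_eq, Polynomial.IsRoot, Polynomial.eval_sub, Polynomial.eval_pow,
      Polynomial.eval_X, Polynomial.eval_C]
    rw [Set.mem_setOf_eq] at hx
    rw [hx]; ring
  apply Set.Finite.of_finite_image _ (Subtype.val_injective.injOn)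
  apply hfin.subset
  rintro _ ⟨y, hy, rfl⟩
  exact (hp.2.1 z y hy).symm

-- assumes: chords_meet, core, top, glue contents
lemma bound_finset (d : ℕ) (hd : 1 ≤ d) (p : Circ → Circ → Prop) (hp : IsNCdPart d p)
    (t : Finset (Set Circ)) (ht : ↑t ⊆ ncBlocks p) :
    ∑ B ∈ t, (B.ncard - 1) ≤ d - 1 := by
  classical
  have hpi := Real.pi_pos
  rcases t.eq_empty_or_nonempty with rfl | ⟨A₀, hA₀⟩
  · simp
  have hrep : ∀ B ∈ t, ∃ z : Circ, B = {y | p z y} := fun B hB => (ht hB).1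
  obtain ⟨z₀, hz₀⟩ := hrep A₀ hA₀
  have hd' : (0 : ℝ) < (d : ℝ) := by exact_mod_cast Nat.lt_of_lt_of_le Nat.zero_lt_one hd
  set u : Circ → ℝ := fun z => (d : ℝ) * psi z₀ z / (2 * Real.pi) with hudef
  have hu0 : u z₀ = 0 := by simp [hudef, psi_self]
  have humem : ∀ z : Circ, 0 ≤ u z ∧ u z < d := by
    intro z
    constructor
    · apply div_nonneg (mul_nonneg hd'.le (psi_nonneg _ _)) (by linarith)
    · rw [div_lt_iff₀ (by linarith)]
      have := psi_lt z₀ z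
      nlinarith
  have hueq : ∀ a b : Circ, u a = u b → psi z₀ a = psi z₀ b := by
    intro a b h
    rw [hudef] at h
    simp only at h
    have h2 := congrArg (· * (2 * Real.pi)) h
    rw [div_mul_cancel₀ _ (by linarith : (2 * Real.pi) ≠ 0),
      div_mul_cancel₀ _ (by linarith : (2 * Real.pi) ≠ 0)] at h2
    exact mul_left_cancel₀ hd'.ne' h2
  have huinj : Function.Injective u := fun a b h => psi_inj z₀ (hueq a b h)
  have humono : ∀ a b : Circ, u a < u b → psi z₀ a < psi z₀ b := by
    intro a b h
    rw [hudef] at h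
    simp only at h
    have h2 := mul_lt_mul_of_pos_right h (by linarith : (0:ℝ) < 2 * Real.pi)
    rw [div_mul_cancel₀ _ (by linarith : (2 * Real.pi) ≠ 0),
      div_mul_cancel₀ _ (by linarith : (2 * Real.pi) ≠ 0)] at h2
    exact lt_of_mul_lt_mul_left h2 hd'.le
  have hublock : ∀ z w : Circ, p z w → ∃ k : ℤ, u z - u w = (k : ℝ) := by
    intro z w h
    obtain ⟨k, hk⟩ := psi_block d z₀ z w (hp.2.1 z w h)
    refine ⟨k, ?_⟩
    rw [hudef]
    simp only
    rw [div_sub_div_same]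
    rw [hk]
    field_simp
  -- block structure facts
  have hsame : ∀ (z : Circ) (a b : Circ), a ∈ {y | p z y} → b ∈ {y | p z y} → p a b := by
    intro z a b ha hb
    exact hp.1.trans (hp.1.symm ha) hb
  have hblockeq : ∀ z w : Circ, p z w → {y | p z y} = {y | p w y} := by
    intro z w h
    ext y
    exact ⟨fun hy => hp.1.trans (hp.1.symm h) hy, fun hy => hp.1.trans h hy⟩
  have hBfin : ∀ B ∈ t, B.Finite := by
    intro B hB
    obtain ⟨z, rfl⟩ := hrep B hB
    exact block_finite d hd p hp z
  set Φ : Set Circ → Finset ℝ :=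
    fun B => if h : B.Finite then (h.toFinset.image u) else (∅ : Finset ℝ) with hΦdef
  have hΦmem : ∀ B ∈ t, ∀ x : ℝ, (x ∈ Φ B ↔ ∃ z ∈ B, u z = x) := by
    intro B hB x
    rw [hΦdef]
    simp only [dif_pos (hBfin B hB), Finset.mem_image, Set.Finite.mem_toFinset]
  have hΦcard : ∀ B ∈ t, (Φ B).card = B.ncard := by
    intro B hB
    rw [hΦdef]
    simp only [dif_pos (hBfin B hB)]
    rw [Finset.card_image_of_injective _ huinj, ← Set.ncard_eq_toFinset_card B (hBfin B hB)]
  have hΦinj : ∀ B ∈ t, ∀ C ∈ t, Φ B = Φ C → B = C := by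
    intro B hB C hC h
    have hcoe : ∀ D ∈ t, ↑(Φ D) = u '' D := by
      intro D hD
      rw [hΦdef]
      simp only [dif_pos (hBfin D hD), Finset.coe_image, Set.Finite.coe_toFinset]
    have : u '' B = u '' C := by
      rw [← hcoe B hB, ← hcoe C hC, h]
    exact Set.image_injective.mpr huinj this
  -- distinct blocks are unrelated and disjoint
  have hnrel : ∀ B ∈ t, ∀ C ∈ t, B ≠ C → ∀ zB zC : Circ, B = {y | p zB y} → C = {y | p zC y}
      → ¬ p zB zC := by
    intro B hB C hC hBC zB zC hzB hzC hrel
    exact hBC (by rw [hzB, hzC, hblockeq zB zC hrel])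
  set F : Finset (Finset ℝ) := t.image Φ with hFdef
  -- hypotheses of `top`
  have h1 : ∀ G ∈ F, G.Nonempty := by
    intro G hG
    obtain ⟨B, hB, rfl⟩ := Finset.mem_image.mp hG
    obtain ⟨z, hz⟩ := hrep B hB
    exact ⟨u z, (hΦmem B hB (u z)).mpr ⟨z, by rw [hz]; exact hp.1.refl z, rfl⟩⟩
  have h2 : ∀ G ∈ F, ∀ x ∈ G, ∀ y ∈ G, ∃ k : ℤ, x - y = (k : ℝ) := by
    intro G hG x hx y hy
    obtain ⟨B, hB, rfl⟩ := Finset.mem_image.mp hG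
    obtain ⟨zx, hzx, rfl⟩ := (hΦmem B hB x).mp hx
    obtain ⟨zy, hzy, rfl⟩ := (hΦmem B hB y).mp hy
    obtain ⟨zB, hzB⟩ := hrep B hB
    rw [hzB] at hzx hzy
    exact hublock zx zy (hsame zB zx zy hzx hzy)
  have h5 : ∀ G ∈ F, ∀ H ∈ F, G ≠ H → Disjoint G H := by
    intro G hG H hH hGH
    obtain ⟨B, hB, rfl⟩ := Finset.mem_image.mp hG
    obtain ⟨C, hC, rfl⟩ := Finset.mem_image.mp hH
    have hBC : B ≠ C := fun h => hGH (by rw [h])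
    rw [Finset.disjoint_left]
    intro x hxB hxC
    obtain ⟨zb, hzb, hub⟩ := (hΦmem B hB x).mp hxB
    obtain ⟨zc, hzc, huc⟩ := (hΦmem C hC x).mp hxC
    have : zb = zc := huinj (by rw [hub, huc])
    subst this
    obtain ⟨zB, hzB⟩ := hrep B hB
    obtain ⟨zC, hzC⟩ := hrep C hC
    apply hnrel B hB C hC hBC zB zC hzB hzC
    rw [hzB] at hzb
    rw [hzC] at hzc
    exact hp.1.trans hzb (hp.1.symm hzc)
  have h4 : ∀ G ∈ F, ∀ x ∈ G, (0:ℝ) ≤ x ∧ x < (d : ℝ) := by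
    intro G hG x hx
    obtain ⟨B, hB, rfl⟩ := Finset.mem_image.mp hG
    obtain ⟨z, _, rfl⟩ := (hΦmem B hB x).mp hx
    exact humem z
  -- the noncrossing condition, via chords_meet
  have h3 : ∀ G ∈ F, ∀ H ∈ F, G ≠ H → ∀ p' ∈ G, ∀ q' ∈ G, ∀ r' ∈ H, ∀ s' ∈ H,
      ¬(p' < r' ∧ r' < q' ∧ q' < s') := by
    intro G hG H hH hGH p' hp' q' hq' r' hr' s' hs' ⟨hpr, hrq, hqs⟩
    obtain ⟨B, hB, rfl⟩ := Finset.mem_image.mp hG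
    obtain ⟨C, hC, rfl⟩ := Finset.mem_image.mp hH
    have hBC : B ≠ C := fun h => hGH (by rw [h])
    obtain ⟨zp, hzp, rfl⟩ := (hΦmem B hB p').mp hp'
    obtain ⟨zq, hzq, rfl⟩ := (hΦmem B hB q').mp hq'
    obtain ⟨zr, hzr, rfl⟩ := (hΦmem C hC r').mp hr'
    obtain ⟨zs, hzs, rfl⟩ := (hΦmem C hC s').mp hs'
    obtain ⟨zB, hzB⟩ := hrep B hB
    obtain ⟨zC, hzC⟩ := hrep C hC
    have hdisj := hp.2.2 zB zC (hnrel B hB C hC hBC zB zC hzB hzC)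
    rw [← hzB, ← hzC] at hdisj
    -- angles
    have h12 : psi z₀ zp < psi z₀ zr := humono _ _ hpr
    have h23 : psi z₀ zr < psi z₀ zq := humono _ _ hrq
    have h34 : psi z₀ zq < psi z₀ zs := humono _ _ hqs
    have h41 : psi z₀ zs - psi z₀ zp < 2 * Real.pi := by
      have := psi_lt z₀ zs
      have := psi_nonneg z₀ zp
      linarith
    obtain ⟨l, m, hl0, hl1, hm0, hm1, heq⟩ :=
      chords_meet (psi z₀ zp) (psi z₀ zr) (psi z₀ zq) (psi z₀ zs) h12 h23 h34 h41
    set X : ℂ := l • (zp : ℂ) + (1 - l) • (zq : ℂ) with hXdef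
    have hXeq : X = m • (zr : ℂ) + (1 - m) • (zs : ℂ) := by
      rw [hXdef, psi_exp z₀ zp, psi_exp z₀ zq, psi_exp z₀ zr, psi_exp z₀ zs]
      simp only [Complex.real_smul] at heq ⊢
      push_cast at heq ⊢
      linear_combination ((z₀ : ℂ)) * heq
    have hXB : X ∈ convexHull ℝ (Subtype.val '' B) := by
      apply (convex_convexHull ℝ _).segment_subset
        (subset_convexHull ℝ (Subtype.val '' B) ⟨zp, hzp, rfl⟩)
        (subset_convexHull ℝ (Subtype.val '' B) ⟨zq, hzq, rfl⟩)
      exact ⟨l, 1 - l, hl0, by linarith, by ring, rfl⟩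
    have hXC : X ∈ convexHull ℝ (Subtype.val '' C) := by
      apply (convex_convexHull ℝ _).segment_subset
        (subset_convexHull ℝ (Subtype.val '' C) ⟨zr, hzr, rfl⟩)
        (subset_convexHull ℝ (Subtype.val '' C) ⟨zs, hzs, rfl⟩)
      exact ⟨m, 1 - m, hm0, by linarith, by ring, hXeq.symm⟩
    exact Set.disjoint_left.mp hdisj hXB hXC
  -- apply `top`
  have hA₀F : Φ A₀ ∈ F := Finset.mem_image_of_mem Φ hA₀
  have h0mem : (0 : ℝ) ∈ Φ A₀ :=
    (hΦmem A₀ hA₀ 0).mpr ⟨z₀, by rw [hz₀]; exact hp.1.refl z₀, hu0⟩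
  have h4' : ∀ G ∈ F, ∀ x ∈ G, (0:ℝ) ≤ x ∧ x < (d : ℝ) := h4
  have hgrid : ∀ x ∈ Φ A₀, ∃ k : ℤ, (d : ℝ) - x = (k : ℝ) := by
    intro x hx
    obtain ⟨z, hz, rfl⟩ := (hΦmem A₀ hA₀ x).mp hx
    rw [hz₀] at hz
    obtain ⟨k, hk⟩ := hublock z z₀ (hp.1.symm hz)
    refine ⟨(d : ℤ) - k, ?_⟩
    rw [hu0] at hk
    push_cast
    linarith
  have htop := top (∑ G ∈ F, G.card) F (Φ A₀) 0 (d : ℝ) le_rfl hA₀F h0mem h1 h2 h3 h5 h4' hgrid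
  -- transfer the sum
  have hsum : ∑ G ∈ F, (G.card - 1) = ∑ B ∈ t, (B.ncard - 1) := by
    rw [hFdef, Finset.sum_image (fun B hB C hC h => hΦinj B hB C hC h)]
    exact Finset.sum_congr rfl fun B hB => by rw [hΦcard B hB]
  rw [hsum] at htop
  have hfinal : ((∑ B ∈ t, (B.ncard - 1) : ℕ) : ℝ) + 1 ≤ (d : ℝ) := by linarith
  have : (∑ B ∈ t, (B.ncard - 1)) + 1 ≤ d := by exact_mod_cast hfinal
  omega


end Aux

/-- a degree-`d` noncrossing partition of the circle has finitely many
non-singleton blocks `A₁, …, A_k`, each finite, and its total criticality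
`(|A₁| − 1) + ⋯ + (|A_k| − 1)` is at most `d − 1`. -/
theorem stmt11 (d : ℕ) (hd : 1 ≤ d) (p : Circ → Circ → Prop) (hp : IsNCdPart d p) :
    (ncBlocks p).Finite ∧ (∀ B ∈ ncBlocks p, B.Finite) ∧
      ∑ᶠ B ∈ ncBlocks p, (B.ncard - 1) ≤ d - 1 := by
  classical
  have hfin : ∀ B ∈ ncBlocks p, B.Finite := by
    intro B hB
    obtain ⟨⟨z, rfl⟩, _⟩ := hB
    exact block_finite d hd p hp z
  have hblocksfin : (ncBlocks p).Finite := by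
    by_contra hinf
    have hinf' : (ncBlocks p).Infinite := hinf
    obtain ⟨t, ht, hcard⟩ := hinf'.exists_subset_card_eq d
    have hbound := bound_finset d hd p hp t ht
    have hterm : ∀ B ∈ t, 1 ≤ B.ncard - 1 := by
      intro B hB
      have hnt : B.Nontrivial := (ht hB).2
      obtain ⟨a, ha, b, hb, hab⟩ := hnt
      have : 1 < B.ncard := (Set.one_lt_ncard (hfin B (ht hB))).mpr ⟨a, ha, b, hb, hab⟩
      omega
    have hge : t.card ≤ ∑ B ∈ t, (B.ncard - 1) := by
      calc t.card = ∑ _B ∈ t, 1 := by simp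
        _ ≤ ∑ B ∈ t, (B.ncard - 1) := Finset.sum_le_sum hterm
    omega
  refine ⟨hblocksfin, hfin, ?_⟩
  rw [finsum_mem_eq_finite_toFinset_sum _ hblocksfin]
  exact bound_finset d hd p hp hblocksfin.toFinset (by simp)
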